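/- For every k ≥ 1 and every pair of permutations π₁, π₂ of {1,…,k}, there exist k pairwise spacelike separated events p₁ = (t₁,x₁), …, p_k = (t_k,x_k) in ℝ × ℝ and velocities v₁, v₂ ∈ (-1,1) such that for each j ∈ {1,2}, t_{π_j(1)} - v_j·x_{π_j(1)} < t_{π_j(2)} - v_j·x_{π_j(2)} < ⋯ < t_{π_j(k)} - v_j·x_{π_j(k)}. That is, any two prescribed orders of k events can be realized by two observers in ℝ^{1,1}. -/

import Mathlib

private lemma nat_dist_ge_one {a b : ℕ} (h : a ≠ b) : 1 ≤ |(a : ℝ) - (b : ℝ)| := by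
  rcases lt_or_gt_of_ne h with h' | h'
  · have : (a : ℝ) + 1 ≤ b := by exact_mod_cast h'
    rw [abs_sub_comm, abs_of_nonneg (by linarith)]
    linarith
  · have : (b : ℝ) + 1 ≤ a := by exact_mod_cast h'
    rw [abs_of_nonneg (by linarith)]
    linarith

theorem two_orders_realizable
    (k : ℕ) (hk : 1 ≤ k) (π₁ π₂ : Equiv.Perm (Fin k)) :
    ∃ t x : Fin k → ℝ,
      (∀ i j : Fin k, i ≠ j → (t i - t j) ^ 2 < (x i - x j) ^ 2) ∧
      ∃ v₁ v₂ : ℝ, -1 < v₁ ∧ v₁ < 1 ∧ -1 < v₂ ∧ v₂ < 1 ∧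
        StrictMono (fun m : Fin k => t (π₁ m) - v₁ * x (π₁ m)) ∧
        StrictMono (fun m : Fin k => t (π₂ m) - v₂ * x (π₂ m)) := by
  set K : ℝ := (k : ℝ) with hKdef
  have hK1 : (1 : ℝ) ≤ K := by simpa [hKdef] using (Nat.one_le_cast (α := ℝ)).mpr hk
  set M : ℝ := K + 1 with hMdef
  have hM : (1 : ℝ) < M := by linarith
  set w : Fin k → ℝ := fun i => ((π₁.symm i : Fin k) : ℕ) with hwdef
  set s : Fin k → ℝ := fun i => ((π₂.symm i : Fin k) : ℕ) with hsdef
  have hw_le : ∀ i, w i ≤ K - 1 := by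
    intro i
    have h1 : ((π₁.symm i : Fin k) : ℕ) < k := (π₁.symm i).isLt
    have : ((π₁.symm i : Fin k) : ℕ) + 1 ≤ k := h1
    have : (((π₁.symm i : Fin k) : ℕ) : ℝ) + 1 ≤ K := by rw [hKdef]; exact_mod_cast this
    simpa [hwdef] using by linarith
  have hs_le : ∀ i, s i ≤ K - 1 := by
    intro i
    have h1 : ((π₂.symm i : Fin k) : ℕ) < k := (π₂.symm i).isLt
    have : ((π₂.symm i : Fin k) : ℕ) + 1 ≤ k := h1
    have : (((π₂.symm i : Fin k) : ℕ) : ℝ) + 1 ≤ K := by rw [hKdef]; exact_mod_cast this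
    simpa [hsdef] using by linarith
  have hw_nn : ∀ i, 0 ≤ w i := fun i => by positivity
  have hs_nn : ∀ i, 0 ≤ s i := fun i => by positivity
  have hw_sep : ∀ i j : Fin k, i ≠ j → 1 ≤ |w i - w j| := by
    intro i j hij
    apply nat_dist_ge_one
    simp only [ne_eq, Fin.val_eq_val]
    exact fun h => hij (π₁.symm.injective (Fin.ext (by exact_mod_cast congrArg Fin.val h)))
  set u : Fin k → ℝ := fun i => -M * w i + s i with hudef
  clear_value K M w s u
  refine ⟨fun i => (u i + w i) / 2, fun i => (w i - u i) / 2, ?_, (1 - M ^ 2) / (1 + M ^ 2),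
    (1 - M) / (1 + M), ?_, ?_, ?_, ?_, ?_, ?_⟩
  · intro i j hij
    have hsep := hw_sep i j hij
    have hcross : (u i - u j) * (w i - w j) < 0 := by
      have hexp : (u i - u j) * (w i - w j)
          = -M * (w i - w j) ^ 2 + (s i - s j) * (w i - w j) := by
        simp only [hudef]; ring
      rw [hexp]
      have h1 : (s i - s j) * (w i - w j) ≤ (K - 1) * |w i - w j| := by
        calc (s i - s j) * (w i - w j) ≤ |(s i - s j) * (w i - w j)| := le_abs_self _
          _ = |s i - s j| * |w i - w j| := abs_mul _ _
          _ ≤ (K - 1) * |w i - w j| := by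
              apply mul_le_mul_of_nonneg_right _ (abs_nonneg _)
              rw [abs_sub_le_iff]
              constructor <;> [linarith [hs_le i, hs_nn j]; linarith [hs_le j, hs_nn i]]
      have h2 : (w i - w j) ^ 2 = |w i - w j| ^ 2 := (sq_abs _).symm
      have hA0 : (0:ℝ) ≤ |w i - w j| := abs_nonneg _
      nlinarith [mul_le_mul_of_nonneg_left hsep (le_of_lt (show (0:ℝ) < M by linarith)),
        mul_le_mul_of_nonneg_left hsep hA0, hM, hK1, h1, h2]
    show ((u i + w i) / 2 - (u j + w j) / 2) ^ 2 < ((w i - u i) / 2 - (w j - u j) / 2) ^ 2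
    have key : ((u i + w i) / 2 - (u j + w j) / 2) ^ 2 - ((w i - u i) / 2 - (w j - u j) / 2) ^ 2
        = (u i - u j) * (w i - w j) := by ring
    linarith [key, hcross]
  · have hpos : (0 : ℝ) < 1 + M ^ 2 := by positivity
    rw [neg_lt, ← neg_div, div_lt_one hpos]; nlinarith
  · have hpos : (0 : ℝ) < 1 + M ^ 2 := by positivity
    rw [div_lt_one hpos]; nlinarith
  · have hpos : (0 : ℝ) < 1 + M := by linarith
    rw [neg_lt, ← neg_div, div_lt_one hpos]; linarith
  · have hpos : (0 : ℝ) < 1 + M := by linarith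
    rw [div_lt_one hpos]; linarith
  · -- observer 1 realizes π₁
    have hpos : (0 : ℝ) < 1 + M ^ 2 := by positivity
    have key : ∀ i, (u i + w i) / 2 - (1 - M ^ 2) / (1 + M ^ 2) * ((w i - u i) / 2)
        = ((M ^ 2 - M) * w i + s i) / (1 + M ^ 2) := by
      intro i
      field_simp [hudef]
      simp only [hudef]; ring
    intro a b hab
    simp only [key]
    have hwa : w (π₁ a) = (a : ℝ) := by
      simp [hwdef]
    have hwb : w (π₁ b) = (b : ℝ) := by
      simp [hwdef]
    rw [div_lt_div_iff_of_pos_right hpos] at *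
    · rw [hwa, hwb]
      have hab' : (a : ℝ) + 1 ≤ (b : ℝ) := by exact_mod_cast hab
      have hMM : M ^ 2 - M = M * K := by rw [hMdef]; ring
      have : (1 : ℝ) * K ≤ M * K := by nlinarith
      nlinarith [hs_le (π₁ a), hs_nn (π₁ b), hs_le (π₁ b), hs_nn (π₁ a)]
  · -- observer 2 realizes π₂
    have hpos : (0 : ℝ) < 1 + M := by linarith
    have key : ∀ i, (u i + w i) / 2 - (1 - M) / (1 + M) * ((w i - u i) / 2)
        = s i / (1 + M) := by
      intro i
      field_simp [hudef]
      simp only [hudef]; ring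
    intro a b hab
    simp only [key]
    have hsa : s (π₂ a) = (a : ℝ) := by simp [hsdef]
    have hsb : s (π₂ b) = (b : ℝ) := by simp [hsdef]
    rw [hsa, hsb, div_lt_div_iff_of_pos_right hpos]
    exact_mod_cast hab
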